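/- Let σ be a permutation of {1,…,n} such that the K-linear map Iuₙ → Iuₙ determined on the basis by x_{ij} ↦ x_{σ(i)σ(j)}, a_i ↦ a_{σ(i)}, b_i ↦ b_{σ(i)} is a Lie algebra automorphism of Iuₙ. Then σ is a power of the cyclic permutation ψ given by ψ(i) = i+1 for i < n and ψ(n) = 1. -/

import Mathlib

/-- Index set for the basis of `Iuₙ`: the off-diagonal pairs indexing the `x_{ij}` (`i ≠ j`),
then the `a_i`'s, then the `b_i`'s. -/
abbrev IuIdx (n : ℕ) : Type := { p : Fin n × Fin n // p.1 ≠ p.2 } ⊕ (Fin n ⊕ Fin n)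

/-- `Iuₙ`: the free `K`-vector space on the basis `{x_{ij} : i ≠ j} ∪ {a_i} ∪ {b_i}`. -/
abbrev Iu (n : ℕ) (K : Type*) [Field K] : Type _ := IuIdx n →₀ K

variable (n : ℕ) (K : Type*) [Field K]

/-- The basis element `x_{ij}` (`i ≠ j`). -/
noncomputable def xE (i j : Fin n) (h : i ≠ j) : Iu n K :=
  Finsupp.single (Sum.inl ⟨(i, j), h⟩) 1

/-- The basis element `a_i`. -/
noncomputable def aE (i : Fin n) : Iu n K := Finsupp.single (Sum.inr (Sum.inl i)) 1

/-- The basis element `b_i`. -/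
noncomputable def bE (i : Fin n) : Iu n K := Finsupp.single (Sum.inr (Sum.inr i)) 1

/-- `x_{ij}` as a total function (junk value `0` when `i = j`). -/
noncomputable def xe (i j : Fin n) : Iu n K := if h : i ≠ j then xE n K i j h else 0

/-- The length `λ(i,j)`: equals `j - i` if `i < j`, and `n - (i - j)` if `i > j`. -/
def lam (n : ℕ) (i j : Fin n) : ℕ := (j - i : Fin n).val

/-- The bracket of `Iuₙ` on basis elements:
`[x_{ij}, x_{kl}] = δ_{jk} x_{il} - δ_{li} x_{kj}` if `λ(i,j) + λ(k,l) < n` and `0` otherwise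
(unless both `j = k` and `l = i`); `[x_{ij}, x_{ji}] = ½(b_i - b_j)`;
`[a_i, x_{jk}] = (δ_{ij} - δ_{ik}) x_{jk}`; `[b_i, x_{jk}] = 0`;
`[a_i, a_j] = [b_i, b_j] = [a_i, b_j] = 0`; extended antisymmetrically. -/
noncomputable def bb : IuIdx n → IuIdx n → Iu n K
  | Sum.inl ⟨(i, j), _⟩, Sum.inl ⟨(k, l), _⟩ =>
      if k = j ∧ l = i then ((2 : K)⁻¹) • (bE n K i - bE n K j)
      else if lam n i j + lam n k l < n then
        (if j = k then xe n K i l else 0) - (if l = i then xe n K k j else 0)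
      else 0
  | Sum.inr (Sum.inl i), Sum.inl ⟨(j, k), _⟩ =>
      (((if i = j then 1 else 0) : K) - ((if i = k then 1 else 0) : K)) • xe n K j k
  | Sum.inl ⟨(j, k), _⟩, Sum.inr (Sum.inl i) =>
      -((((if i = j then 1 else 0) : K) - ((if i = k then 1 else 0) : K)) • xe n K j k)
  | _, _ => 0

/-- The bilinear bracket of `Iuₙ`, extended bilinearly from its values on basis elements. -/
noncomputable def br : Iu n K →ₗ[K] Iu n K →ₗ[K] Iu n K :=
  Finsupp.lift (Iu n K →ₗ[K] Iu n K) K (IuIdx n) fun s =>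
    Finsupp.lift (Iu n K) K (IuIdx n) fun t => bb n K s t

/-- The linear map on `Iuₙ` induced by a permutation `σ` of the indices:
`x_{ij} ↦ x_{σ(i)σ(j)}`, `a_i ↦ a_{σ(i)}`, `b_i ↦ b_{σ(i)}`. -/
noncomputable def permMap (σ : Equiv.Perm (Fin n)) : Iu n K →ₗ[K] Iu n K :=
  Finsupp.lift (Iu n K) K (IuIdx n) fun t =>
    match t with
    | Sum.inl ⟨(i, j), _⟩ => xe n K (σ i) (σ j)
    | Sum.inr (Sum.inl i) => aE n K (σ i)
    | Sum.inr (Sum.inr i) => bE n K (σ i)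

lemma br_xx (i j k l : Fin n) (hij : i ≠ j) (hkl : k ≠ l) :
    br n K (xE n K i j hij) (xE n K k l hkl) =
      bb n K (Sum.inl ⟨(i, j), hij⟩) (Sum.inl ⟨(k, l), hkl⟩) := by
  simp [br, xE, Finsupp.lift_apply, Finsupp.sum_single_index]

lemma permMap_x (σ : Equiv.Perm (Fin n)) (i j : Fin n) (hij : i ≠ j) :
    permMap n K σ (xE n K i j hij) = xE n K (σ i) (σ j) (fun h => hij (σ.injective h)) := by
  simp only [permMap, xE, Finsupp.lift_apply, Finsupp.sum_single_index, zero_smul, one_smul]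
  rw [xe, dif_pos (fun h => hij (σ.injective h))]
  rfl

lemma xE_ne_zero (i j : Fin n) (hij : i ≠ j) : xE n K i j hij ≠ 0 :=
  fun h => one_ne_zero (Finsupp.single_eq_zero.mp h)

open Fin.CommRing in
lemma lam_pos {m : ℕ} [NeZero m] {i j : Fin m} (h : i ≠ j) : 0 < lam m i j := by
  rcases Nat.eq_zero_or_pos (lam m i j) with h0 | h0
  · exfalso
    apply h
    have : (j - i : Fin m) = 0 := by
      have : (j - i : Fin m).val = (0 : Fin m).val := by simp [← h0, lam, Nat.mod_eq_of_lt (j - i).isLt]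
      exact Fin.val_injective this
    exact (sub_eq_zero.mp this).symm
  · exact h0

lemma lam_lt {m : ℕ} [NeZero m] (i j : Fin m) : lam m i j < m := (j - i).isLt

open Fin.CommRing in
lemma lam_add {m : ℕ} [NeZero m] (i j l : Fin m) (h : lam m i j + lam m j l < m) :
    lam m i l = lam m i j + lam m j l := by
  have e : (l - i : Fin m) = (j - i) + (l - j) := by ring
  rw [lam, e, Fin.val_add_eq_of_add_lt h]
  rfl

open Fin.CommRing in
lemma lam_cycle {m : ℕ} [NeZero m] {i j : Fin m} (h : i ≠ j) :
    lam m i j + lam m j i = m := by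
  have h1 := lam_pos h
  have h2 := lam_pos h.symm
  have h3 := lam_lt i j
  have h4 := lam_lt j i
  have e : ((j - i) + (i - j) : Fin m) = 0 := by ring
  have e2 : (lam m i j + lam m j i) % m = 0 := by
    have := Fin.val_add (j - i) (i - j)
    rw [e] at this
    simpa [lam] using this.symm
  obtain ⟨c, hc⟩ := Nat.dvd_of_mod_eq_zero e2
  have hc1 : 1 ≤ c := by nlinarith
  have hc2 : c < 2 := by nlinarith
  have hc3 : c = 1 := by nlinarith
  rw [hc3, mul_one] at hc
  omega

open Fin.CommRing in
lemma val_one_eq {m : ℕ} [NeZero m] (hm : 2 ≤ m) : ((1 : Fin m)).val = 1 := by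
  rw [← Nat.cast_one (R := Fin m), Fin.val_natCast]
  exact Nat.mod_eq_of_lt (by omega)

open Fin.CommRing in
lemma lam_one {m : ℕ} [NeZero m] (hm : 2 ≤ m) (i : Fin m) : lam m i (i + 1) = 1 := by
  have e : (i + 1 - i : Fin m) = 1 := by ring
  rw [lam, e, val_one_eq hm]

open Fin.CommRing in
lemma lam_eq_one {m : ℕ} [NeZero m] (hm : 2 ≤ m) {i j : Fin m} (h : lam m i j = 1) :
    j = i + 1 := by
  have h1 : (j - i : Fin m).val = (i + 1 - i : Fin m).val := by
    rw [← lam, ← lam, h, lam_one hm]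
  have h2 := Fin.val_injective h1
  have h3 : j - i = 1 := by rw [h2]; ring
  rw [sub_eq_iff_eq_add] at h3
  rw [h3, add_comm]

/-- if the map induced by a permutation `σ` is a Lie algebra automorphism of
`Iuₙ` then `σ` is a power of the cyclic permutation `ψ : i ↦ i + 1` (mod `n`). -/
theorem stmt18 (n : ℕ) [NeZero n] (hn : 2 ≤ n) (K : Type*) [Field K] (hK : (2 : K) ≠ 0)
    (σ : Equiv.Perm (Fin n))
    (hbij : Function.Bijective (permMap n K σ))
    (hhom : ∀ u v : Iu n K,
      permMap n K σ (br n K u v) = br n K (permMap n K σ u) (permMap n K σ v)) :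
    ∃ k : ℕ, σ = (Equiv.addRight (1 : Fin n)) ^ k := by
  open Fin.CommRing in
    have hone0 : (1 : Fin n) ≠ 0 := by
      intro h
      have := val_one_eq (m := n) hn
      rw [h] at this
      simp at this
    have hne_succ : ∀ j : Fin n, j ≠ j + 1 := by
      intro j h
      exact hone0 (by
        have : j + 0 = j + 1 := by rw [add_zero]; exact h
        exact (add_left_cancel this).symm)
    -- step lemma
    have step : ∀ i j l : Fin n, ∀ hij : i ≠ j, ∀ hjl : j ≠ l, l ≠ i →
        lam n i j + lam n j l < n →
        lam n (σ i) (σ j) + lam n (σ j) (σ l) < n := by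
      intro i j l hij hjl hli hlt
      by_contra hge
      have h := hhom (xE n K i j hij) (xE n K j l hjl)
      have hL : bb n K (Sum.inl ⟨(i, j), hij⟩) (Sum.inl ⟨(j, l), hjl⟩) =
          xE n K i l (Ne.symm hli) := by
        show (if j = j ∧ l = i then _ else if lam n i j + lam n j l < n then
          (if j = j then xe n K i l else 0) - (if l = i then xe n K j j else 0) else 0) = _
        rw [if_neg (fun hc => hli hc.2), if_pos hlt, if_pos rfl, if_neg hli, sub_zero,
          xe, dif_pos (Ne.symm hli)]
      have hR : bb n K (Sum.inl ⟨(σ i, σ j), fun hh => hij (σ.injective hh)⟩)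
          (Sum.inl ⟨(σ j, σ l), fun hh => hjl (σ.injective hh)⟩) = 0 := by
        show (if σ j = σ j ∧ σ l = σ i then _ else
          if lam n (σ i) (σ j) + lam n (σ j) (σ l) < n then _ else 0) = 0
        rw [if_neg (fun hc => hli (σ.injective hc.2)), if_neg hge]
      rw [br_xx, hL, permMap_x, permMap_x, permMap_x, br_xx, hR] at h
      exact xE_ne_zero n K (σ i) (σ l) _ h
    -- the chain of consecutive lengths
    set m' : ℕ → ℕ := fun j => lam n (σ (j : Fin n)) (σ ((j + 1 : ℕ) : Fin n)) with hm'
    have hcast_succ : ∀ j : ℕ, ((j + 1 : ℕ) : Fin n) = (j : Fin n) + 1 := by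
      intro j; push_cast; ring
    have hm'pos : ∀ j : ℕ, 1 ≤ m' j := by
      intro j
      apply lam_pos
      intro h
      exact hne_succ (j : Fin n) (by rw [← hcast_succ j, σ.injective h])
    have hvalcast : ∀ k : ℕ, k < n → ((k : Fin n)).val = k := by
      intro k hk
      rw [Fin.val_natCast]
      exact Nat.mod_eq_of_lt hk
    have hlam0 : ∀ k : ℕ, k < n → lam n 0 ((k : Fin n)) = k := by
      intro k hk
      rw [lam, sub_zero]
      exact hvalcast k hk
    have chain : ∀ k : ℕ, 1 ≤ k → k ≤ n - 1 →
        lam n (σ 0) (σ (k : Fin n)) = ∑ j ∈ Finset.range k, m' j := by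
      intro k
      induction k with
      | zero => omega
      | succ k ih =>
        intro _ hk1
        rcases Nat.eq_zero_or_pos k with hk0 | hk0
        · subst hk0
          simp [hm']
        · have ihk := ih hk0 (by omega)
          have hkn : k < n := by omega
          have hk1n : k + 1 < n := by omega
          have hij : (0 : Fin n) ≠ (k : Fin n) := by
            intro h
            have := hvalcast k hkn
            rw [← h] at this
            simp at this
            omega
          have hjl : (k : Fin n) ≠ ((k + 1 : ℕ) : Fin n) := by
            rw [hcast_succ]; exact hne_succ _
          have hli : ((k + 1 : ℕ) : Fin n) ≠ (0 : Fin n) := by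
            intro h
            have := hvalcast (k + 1) hk1n
            rw [h] at this
            simp at this
          have hlt : lam n 0 (k : Fin n) + lam n (k : Fin n) ((k + 1 : ℕ) : Fin n) < n := by
            rw [hlam0 k hkn, hcast_succ, lam_one hn]
            omega
          have hs := step 0 (k : Fin n) ((k + 1 : ℕ) : Fin n) hij hjl hli hlt
          rw [lam_add _ _ _ hs, ihk, Finset.sum_range_succ]
    -- total sum is n
    have hne10 : ((n - 1 : ℕ) : Fin n) ≠ 0 := by
      intro h
      have := hvalcast (n - 1) (by omega)
      rw [h] at this
      simp at this
      omega
    have hlast := chain (n - 1) (by omega) le_rfl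
    have hmlast : m' (n - 1) = lam n (σ ((n - 1 : ℕ) : Fin n)) (σ 0) := by
      have : ((n - 1 + 1 : ℕ) : Fin n) = (0 : Fin n) := by
        have : n - 1 + 1 = n := by omega
        rw [this, Fin.natCast_self]
      rw [hm']
      simp only []
      rw [this]
    have hcyc := lam_cycle (show σ 0 ≠ σ ((n - 1 : ℕ) : Fin n) from
      fun h => hne10 (σ.injective h).symm)
    have htotal : ∑ j ∈ Finset.range n, m' j = n := by
      have hrs : n = (n - 1) + 1 := by omega
      rw [hrs, Finset.sum_range_succ, ← hrs, ← hlast, hmlast]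
      omega
    -- each m' j = 1
    have hm'one : ∀ j : ℕ, j < n → m' j = 1 := by
      intro j hj
      by_contra hne
      have h2 : 2 ≤ m' j := by have := hm'pos j; omega
      have hlt := Finset.sum_lt_sum (s := Finset.range n) (f := fun _ => 1) (g := m')
        (fun i _ => hm'pos i) ⟨j, Finset.mem_range.mpr hj, show (1:ℕ) < m' j by omega⟩
      simp [htotal] at hlt
    have hsucc : ∀ j : Fin n, σ (j + 1) = σ j + 1 := by
      intro j
      have h1 : m' j.val = 1 := hm'one j.val j.isLt
      rw [hm'] at h1
      simp only [] at h1
      rw [hcast_succ, Fin.cast_val_eq_self] at h1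
      exact lam_eq_one hn h1
    have hσ : ∀ k : ℕ, σ (k : Fin n) = (k : Fin n) + σ 0 := by
      intro k
      induction k with
      | zero => simp
      | succ k ih =>
        rw [hcast_succ, hsucc, ih]
        ring
    have hpow : ∀ (k : ℕ) (i : Fin n), ((Equiv.addRight (1 : Fin n)) ^ k) i = i + (k : Fin n) := by
      intro k
      induction k with
      | zero => intro i; simp
      | succ k ih =>
        intro i
        rw [pow_succ', Equiv.Perm.mul_apply, ih, hcast_succ]
        show i + (k : Fin n) + 1 = i + ((k : Fin n) + 1)
        ring
    refine ⟨(σ 0).val, Equiv.ext fun i => ?_⟩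
    rw [hpow, Fin.cast_val_eq_self]
    have := hσ i.val
    rw [Fin.cast_val_eq_self] at this
    exact this
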